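/- arXiv:2504.09552 — 2 statements merged into one kernel-verified Lean document; each statement's English description precedes it below -/
import Mathlib

section
/- Let V = ℂ³ × ℂ³ × ℂ × ℂ × ℂ with coordinates (x₁,x₂,x₃,y₁,y₂,y₃,p,u,v). The common vanishing locus in V of the functions xᵢ yⱼ v², yⱼ u v, and p u⁶ yⱼ⁶ (for all 1 ≤ i, j ≤ 3) is exactly the union of the four linear subvarieties {(y₁,y₂,y₃) = 0} ∪ {(u,v) = 0} ∪ {(x₁,x₂,x₃,u) = 0} ∪ {(p,v) = 0}. In other words, a point (x,y,p,u,v) ∈ ℂ⁹ satisfies xᵢ yⱼ v² = 0, yⱼ u v = 0 and p u⁶ yⱼ⁶ = 0 for all 1 ≤ i, j ≤ 3 if and only if (y₁,y₂,y₃) = 0, or (u,v) = 0, or (x₁,x₂,x₃,u) = 0, or (p,v) = 0. -/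
/-- The common vanishing locus in `V = ℂ³ × ℂ³ × ℂ × ℂ × ℂ` of the functions
`xᵢ yⱼ v²`, `yⱼ u v`, `p u⁶ yⱼ⁶` (for `1 ≤ i, j ≤ 3`) is exactly the union
`{y = 0} ∪ {(u,v) = 0} ∪ {(x,u) = 0} ∪ {(p,v) = 0}`. -/
theorem unstable_locus_eq_union (x y : Fin 3 → ℂ) (p u v : ℂ) :
    (∀ i j : Fin 3,
        x i * y j * v ^ 2 = 0 ∧ y j * u * v = 0 ∧ p * u ^ 6 * y j ^ 6 = 0) ↔
      (y = 0 ∨ (u = 0 ∧ v = 0) ∨ (x = 0 ∧ u = 0) ∨ (p = 0 ∧ v = 0)) := by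
  constructor
  · intro h
    by_cases hy : y = 0
    · exact Or.inl hy
    · obtain ⟨j, hj⟩ := Function.ne_iff.mp hy
      simp only [Pi.zero_apply] at hj
      by_cases hv : v = 0
      · by_cases hu : u = 0
        · exact Or.inr (Or.inl ⟨hu, hv⟩)
        · refine Or.inr (Or.inr (Or.inr ⟨?_, hv⟩))
          have := (h 0 j).2.2
          have hy6 : y j ^ 6 ≠ 0 := pow_ne_zero _ hj
          have hu6 : u ^ 6 ≠ 0 := pow_ne_zero _ hu
          rcases mul_eq_zero.mp this with h' | h'
          · rcases mul_eq_zero.mp h' with h'' | h''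
            · exact h''
            · exact absurd h'' hu6
          · exact absurd h' hy6
      · have hu : u = 0 := by
          have := (h 0 j).2.1
          rcases mul_eq_zero.mp this with h' | h'
          · rcases mul_eq_zero.mp h' with h'' | h''
            · exact absurd h'' hj
            · exact h''
          · exact absurd h' hv
        refine Or.inr (Or.inr (Or.inl ⟨?_, hu⟩))
        funext i
        have := (h i j).1
        have hv2 : v ^ 2 ≠ 0 := pow_ne_zero _ hv
        rcases mul_eq_zero.mp this with h' | h'
        · rcases mul_eq_zero.mp h' with h'' | h''
          · exact h''
          · exact absurd h'' hj
        · exact absurd h' hv2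
  · rintro (hy | ⟨hu, hv⟩ | ⟨hx, hu⟩ | ⟨hp, hv⟩) <;> intro i j <;>
      simp_all
end

section
/- Let V = ℂ³ × ℂ³ × ℂ × ℂ × ℂ with coordinates (x,y,p,u,v) where x = (x₁,x₂,x₃), y = (y₁,y₂,y₃), and let G = (ℂ*)³ act on V by (s₁,s₂,s₃)·(x,y,p,u,v) = (s₁x, s₂y, s₁⁻³s₂⁻³p, s₁s₃u, s₃v). Suppose the point (x,y,p,u,v) is stable, i.e. it does NOT lie in the union {y = 0} ∪ {(u,v) = 0} ∪ {(x,u) = 0} ∪ {(p,v) = 0}. Then the following are equivalent: (i) for every t ∈ ℂ* there exists g ∈ G with g·(x,y,p,tu,v) = (x,y,p,u,v) (i.e. the G-orbit of the point is fixed by the ℂ*-action scaling the u-coordinate); (ii) u = 0, or v = 0, or (x = 0 and p = 0). -/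
/-- For a stable point `(x,y,p,u,v)` of `V = ℂ³ × ℂ³ × ℂ × ℂ × ℂ` under the
`G = (ℂ*)³`-action `(s₁,s₂,s₃)·(x,y,p,u,v) = (s₁x, s₂y, s₁⁻³s₂⁻³p, s₁s₃u, s₃v)`,
the `G`-orbit of the point is fixed by the `ℂ*`-action scaling the `u`-coordinate
if and only if `u = 0`, or `v = 0`, or `(x = 0 ∧ p = 0)`. -/
theorem fixed_locus_of_Cstar_action (x y : Fin 3 → ℂ) (p u v : ℂ)
    (hstab : ¬ y = 0 ∧ ¬ (u = 0 ∧ v = 0) ∧ ¬ (x = 0 ∧ u = 0) ∧ ¬ (p = 0 ∧ v = 0)) :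
    (∀ t : ℂ, t ≠ 0 → ∃ s₁ s₂ s₃ : ℂ, s₁ ≠ 0 ∧ s₂ ≠ 0 ∧ s₃ ≠ 0 ∧
        (fun i => s₁ * x i) = x ∧
        (fun j => s₂ * y j) = y ∧
        s₁⁻¹ ^ 3 * s₂⁻¹ ^ 3 * p = p ∧
        s₁ * s₃ * (t * u) = u ∧
        s₃ * v = v) ↔
      (u = 0 ∨ v = 0 ∨ (x = 0 ∧ p = 0)) := by
  obtain ⟨hy, huv, hxu, hpv⟩ := hstab
  constructor
  · intro h
    by_contra hc
    push_neg at hc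
    obtain ⟨hu, hv, hxp⟩ := hc
    obtain ⟨s₁, s₂, s₃, hs₁, hs₂, hs₃, hx, hys, hp, hus, hvs⟩ := h 2 two_ne_zero
    have hs3 : s₃ = 1 := by
      have h1 : s₃ * v = 1 * v := by rw [one_mul]; exact hvs
      exact mul_right_cancel₀ hv h1
    have h2 : s₁ * 2 = 1 := by
      rw [hs3, mul_one] at hus
      have h1 : s₁ * 2 * u = 1 * u := by rw [one_mul]; linear_combination hus
      exact mul_right_cancel₀ hu h1
    by_cases hx0 : x = 0
    · have hp0 : p ≠ 0 := hxp hx0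
      -- s₂ = 1
      obtain ⟨j, hj⟩ : ∃ j, y j ≠ 0 := by
        by_contra hall
        push_neg at hall
        exact hy (funext hall)
      have hs2 : s₂ = 1 := by
        have h1 : s₂ * y j = 1 * y j := by rw [one_mul]; exact congrFun hys j
        exact mul_right_cancel₀ hj h1
      have hs1inv : s₁⁻¹ = 2 := by
        field_simp
        linear_combination -h2
      rw [hs2, hs1inv] at hp
      norm_num at hp
      have : (7 : ℂ) * p = 0 := by linear_combination hp
      have h7 : (7 : ℂ) ≠ 0 := by norm_num
      exact hp0 (by
        rcases mul_eq_zero.mp this with h | h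
        · exact absurd h h7
        · exact h)
    · obtain ⟨i, hi⟩ : ∃ i, x i ≠ 0 := by
        by_contra hall
        push_neg at hall
        exact hx0 (funext hall)
      have hs1 : s₁ = 1 := by
        have h1 : s₁ * x i = 1 * x i := by rw [one_mul]; exact congrFun hx i
        exact mul_right_cancel₀ hi h1
      rw [hs1] at h2
      norm_num at h2
  · rintro (hu | hv | ⟨hx0, hp0⟩) t ht
    · exact ⟨1, 1, 1, one_ne_zero, one_ne_zero, one_ne_zero, by simp, by simp,
        by simp, by simp [hu], by simp⟩
    · by_cases hu0 : u = 0
      · exact ⟨1, 1, 1, one_ne_zero, one_ne_zero, one_ne_zero, by simp, by simp,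
        by simp, by simp [hu0], by simp⟩
      · refine ⟨1, 1, t⁻¹, one_ne_zero, one_ne_zero, inv_ne_zero ht, by simp, by simp,
          by simp, ?_, by simp [hv]⟩
        field_simp
    · refine ⟨t⁻¹, 1, 1, inv_ne_zero ht, one_ne_zero, one_ne_zero, ?_, by simp,
        by simp [hp0], ?_, by simp⟩
      · funext i; simp [hx0]
      · field_simp
end
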